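/- arXiv:math-ph/0011046 — 2 statements merged into one kernel-verified Lean document; each statement's English description precedes it below -/
import Mathlib

section
/- Let d ≥ 1 and let q > d/2, and define S̄ := sup_{x∈ℤ^d} ∑_{y∈ℤ^d} (|y|+1)^{−q}(|x−y|+1)^{−q}, which is finite. Then there is a constant C depending only on d and q such that for all x, y ∈ ℤ^d, ∑_{u∈ℤ^d} (|u|+1)^{−2q}(|x−u|+1)^{−q}(|y−u|+1)^{−q} ≤ C S̄ (|x|+1)^{−q}(|y|+1)^{−q}. -/
open scoped BigOperators ENNReal

/-- Points of `ℤ^d`. -/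
abbrev V (d : ℕ) := Fin d → ℤ

/-- The Euclidean norm of a point of `ℤ^d`. -/
noncomputable def znorm {d : ℕ} (x : V d) : ℝ :=
  Real.sqrt (∑ i, ((x i : ℝ)) ^ 2)

/-- The weight `|x| + 1`, as an extended nonnegative real. -/
noncomputable def w {d : ℕ} (x : V d) : ℝ≥0∞ := ENNReal.ofReal (znorm x + 1)

/-- The bubble quantity `S̄ = sup_x ∑_y (|y|+1)^{−q} (|x−y|+1)^{−q}`. -/
noncomputable def Sbar (d : ℕ) (q : ℝ) : ℝ≥0∞ :=
  ⨆ x : V d, ∑' y : V d, w y ^ (-q) * w (x - y) ^ (-q)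

namespace Stmt9Aux

variable {d : ℕ}

lemma znorm_nonneg (x : V d) : 0 ≤ znorm x := Real.sqrt_nonneg _

lemma znorm_neg (x : V d) : znorm (-x) = znorm x := by simp [znorm]

lemma znorm_eq (x : V d) :
    znorm x = ‖(WithLp.toLp 2 (fun i => (x i : ℝ)) : EuclideanSpace ℝ (Fin d))‖ := by
  rw [EuclideanSpace.norm_eq]
  simp [znorm, sq_abs]

lemma znorm_triangle (x y : V d) : znorm (x + y) ≤ znorm x + znorm y := by
  rw [znorm_eq, znorm_eq, znorm_eq]
  have h : (WithLp.toLp 2 (fun i => ((x + y) i : ℝ)) : EuclideanSpace ℝ (Fin d)) =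
      (WithLp.toLp 2 (fun i => (x i : ℝ)) : EuclideanSpace ℝ (Fin d)) +
      (WithLp.toLp 2 (fun i => (y i : ℝ)) : EuclideanSpace ℝ (Fin d)) := by
    ext i
    simp
  rw [h]
  exact norm_add_le _ _

lemma one_le_w (x : V d) : 1 ≤ w x := by
  rw [w, ← ENNReal.ofReal_one]
  exact ENNReal.ofReal_le_ofReal (by linarith [znorm_nonneg x])

lemma w_ne_zero (x : V d) : w x ≠ 0 := (lt_of_lt_of_le zero_lt_one (one_le_w x)).ne'

lemma w_ne_top (x : V d) : w x ≠ ⊤ := ENNReal.ofReal_ne_top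

lemma w_neg (x : V d) : w (-x) = w x := by rw [w, w, znorm_neg]

lemma w_le_add (x u : V d) : w x ≤ w u + w (x - u) := by
  rw [w, w, w, ← ENNReal.ofReal_add (by linarith [znorm_nonneg u]) (by linarith [znorm_nonneg (x - u)])]
  apply ENNReal.ofReal_le_ofReal
  have h := znorm_triangle u (x - u)
  have h2 : u + (x - u) = x := by abel
  rw [h2] at h
  linarith

lemma rpow_neg_le {a b : ℝ≥0∞} {q : ℝ} (hq : 0 ≤ q) (h : a ≤ b) : b ^ (-q) ≤ a ^ (-q) := by
  rw [ENNReal.rpow_neg, ENNReal.rpow_neg]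
  exact ENNReal.inv_le_inv.mpr (ENNReal.rpow_le_rpow h hq)

lemma two_bound {q : ℝ} (hq : 0 ≤ q) {b c : ℝ≥0∞} (hb : b ≠ ⊤) (hcb : c ≤ 2 * b) :
    b ^ (-q) ≤ 2 ^ q * c ^ (-q) := by
  have h1 : (2 * b) ^ (-q) ≤ c ^ (-q) := rpow_neg_le hq hcb
  have h2 : (2 : ℝ≥0∞) ^ (-q) * b ^ (-q) = (2 * b) ^ (-q) :=
    (ENNReal.mul_rpow_of_ne_top ENNReal.ofNat_ne_top hb _).symm
  calc b ^ (-q) = 2 ^ q * (2 ^ (-q) * b ^ (-q)) := by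
        rw [← mul_assoc, ← ENNReal.rpow_add q (-q) two_ne_zero ENNReal.ofNat_ne_top,
          add_neg_cancel, ENNReal.rpow_zero, one_mul]
    _ = 2 ^ q * (2 * b) ^ (-q) := by rw [h2]
    _ ≤ 2 ^ q * c ^ (-q) := mul_le_mul_right h1 _

/-- The key pointwise bound. -/
lemma key {q : ℝ} (hq : 0 ≤ q) (x u : V d) :
    w u ^ (-q) * w (x - u) ^ (-q) ≤
      2 ^ q * w x ^ (-q) * (w u ^ (-q) + w (x - u) ^ (-q)) := by
  rcases le_total (w u) (w (x - u)) with h | h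
  · have hcb : w x ≤ 2 * w (x - u) :=
      (w_le_add x u).trans (by rw [two_mul]; exact add_le_add_left h _)
    have hb := two_bound hq (w_ne_top (x - u)) hcb
    calc w u ^ (-q) * w (x - u) ^ (-q)
        ≤ w u ^ (-q) * (2 ^ q * w x ^ (-q)) := mul_le_mul_right hb _
      _ = 2 ^ q * w x ^ (-q) * w u ^ (-q) := by ring
      _ ≤ 2 ^ q * w x ^ (-q) * (w u ^ (-q) + w (x - u) ^ (-q)) :=
          mul_le_mul_right le_self_add _
  · have hcb : w x ≤ 2 * w u :=
      (w_le_add x u).trans (by rw [two_mul]; exact add_le_add_right h _)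
    have hb := two_bound hq (w_ne_top u) hcb
    calc w u ^ (-q) * w (x - u) ^ (-q)
        ≤ 2 ^ q * w x ^ (-q) * w (x - u) ^ (-q) := mul_le_mul_left hb _
      _ ≤ 2 ^ q * w x ^ (-q) * (w u ^ (-q) + w (x - u) ^ (-q)) :=
          mul_le_mul_right le_add_self _

lemma tsum_sub_left (x : V d) (f : V d → ℝ≥0∞) : ∑' u : V d, f (x - u) = ∑' u : V d, f u :=
  (Equiv.subLeft x).tsum_eq f

lemma sum_le_Sbar_1 (q : ℝ) (y : V d) :
    ∑' u : V d, w u ^ (-q) * w (y - u) ^ (-q) ≤ Sbar d q :=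
  le_iSup (fun x : V d => ∑' u : V d, w u ^ (-q) * w (x - u) ^ (-q)) y

lemma sum_le_Sbar_0 (q : ℝ) : ∑' u : V d, w u ^ (-q) * w u ^ (-q) ≤ Sbar d q := by
  have h := sum_le_Sbar_1 (d := d) q 0
  have e : ∀ u : V d, w (0 - u) = w u := fun u => by rw [zero_sub, w_neg]
  calc ∑' u : V d, w u ^ (-q) * w u ^ (-q)
      = ∑' u : V d, w u ^ (-q) * w (0 - u) ^ (-q) := tsum_congr fun u => by rw [e u]
    _ ≤ Sbar d q := h

lemma sum_le_Sbar_2 (q : ℝ) (x y : V d) :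
    ∑' u : V d, w (x - u) ^ (-q) * w (y - u) ^ (-q) ≤ Sbar d q := by
  have hcongr : ∀ u : V d, w (y - u) = w ((x - y) - (x - u)) := by
    intro u
    have h : (x - y) - (x - u) = -(y - u) := by abel
    rw [h, w_neg]
  calc ∑' u : V d, w (x - u) ^ (-q) * w (y - u) ^ (-q)
      = ∑' u : V d, (fun v : V d => w v ^ (-q) * w ((x - y) - v) ^ (-q)) (x - u) :=
        tsum_congr fun u => by simp only []; rw [← hcongr u]
    _ = ∑' v : V d, w v ^ (-q) * w ((x - y) - v) ^ (-q) := tsum_sub_left x (fun v : V d => w v ^ (-q) * w ((x - y) - v) ^ (-q))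
    _ ≤ Sbar d q := sum_le_Sbar_1 q (x - y)



lemma tsum_pi_prod (g : ℤ → ℝ≥0∞) : ∀ n : ℕ,
    ∑' u : Fin n → ℤ, ∏ i, g (u i) = (∑' k : ℤ, g k) ^ n := by
  intro n
  induction n with
  | zero =>
    rw [pow_zero]
    have h1 : ∀ u : Fin 0 → ℤ, ∏ i, g (u i) = 1 := fun u => by simp
    rw [tsum_congr h1]
    exact tsum_eq_single (default : Fin 0 → ℤ)
      (fun b hb => absurd (Subsingleton.elim b default) hb)
  | succ n ih =>
    calc ∑' u : Fin (n + 1) → ℤ, ∏ i, g (u i)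
        = ∑' p : ℤ × (Fin n → ℤ), ∏ i, g ((Fin.cons p.1 p.2 : Fin (n+1) → ℤ) i) := by
          rw [← Equiv.tsum_eq (Fin.consEquiv (fun _ : Fin (n + 1) => ℤ))
            (fun u : Fin (n + 1) → ℤ => ∏ i, g (u i))]
          exact tsum_congr fun p => by simp [Fin.consEquiv_apply]
      _ = ∑' a : ℤ, ∑' v : Fin n → ℤ, ∏ i, g ((Fin.cons a v : Fin (n+1) → ℤ) i) := ENNReal.tsum_prod'
      _ = ∑' a : ℤ, ∑' v : Fin n → ℤ, g a * ∏ i : Fin n, g (v i) := by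
          refine tsum_congr fun a => tsum_congr fun v => ?_
          simp [Fin.prod_univ_succ]
      _ = ∑' a : ℤ, g a * (∑' k : ℤ, g k) ^ n := by
          refine tsum_congr fun a => ?_
          rw [ENNReal.tsum_mul_left, ih]
      _ = (∑' k : ℤ, g k) ^ (n + 1) := by
          rw [ENNReal.tsum_mul_right, pow_succ]
          ring

lemma Sbar_ne_top (hd : 1 ≤ d) {q : ℝ} (hq : (d : ℝ) / 2 < q) : Sbar d q ≠ ⊤ := by
  have hd0 : (0 : ℝ) < d := by exact_mod_cast Nat.lt_of_lt_of_le Nat.zero_lt_one hd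
  have hq0 : 0 < q := by linarith
  set p : ℝ := 2 * q / d with hp_def
  have hp : 1 < p := (one_lt_div hd0).mpr (by linarith)
  have hp0 : 0 < p := by linarith
  set g : ℤ → ℝ≥0∞ := fun k => ENNReal.ofReal (|(k : ℝ)| + 1) ^ (-p) with hg
  -- summability of the real version
  have hnat : Summable (fun n : ℕ => ((n : ℝ) + 1) ^ (-p)) := by
    have h1 : Summable (fun n : ℕ => ((n : ℝ) ^ p)⁻¹) := Real.summable_nat_rpow_inv.mpr hp
    have h2 := h1.comp_injective (add_left_injective 1)
    refine h2.congr fun n => ?_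
    simp only [Function.comp_apply]
    rw [Real.rpow_neg (by positivity)]
    push_cast
    ring_nf
  have hint : Summable (fun k : ℤ => (|(k : ℝ)| + 1) ^ (-p)) := by
    refine Summable.of_nat_of_neg (hnat.congr fun n => ?_) (hnat.congr fun n => ?_)
    · norm_num
    · push_cast
      rw [abs_neg, abs_of_nonneg (by positivity : (0:ℝ) ≤ (n:ℝ))]
  have hgs : ∑' k : ℤ, g k ≠ ⊤ := by
    have he : ∀ k : ℤ, g k = ENNReal.ofReal ((|(k : ℝ)| + 1) ^ (-p)) := fun k =>
      ENNReal.ofReal_rpow_of_pos (by positivity)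
    rw [tsum_congr he, ← ENNReal.ofReal_tsum_of_nonneg (fun k => by positivity) hint]
    exact ENNReal.ofReal_ne_top
  -- pointwise domination of the diagonal term
  have hpt : ∀ u : V d, w u ^ (-q) * w u ^ (-q) ≤ ∏ i : Fin d, g (u i) := by
    intro u
    have h1 : w u ^ (-q) * w u ^ (-q) = (w u ^ (-p)) ^ d := by
      rw [← ENNReal.rpow_natCast (w u ^ (-p)) d, ← ENNReal.rpow_mul,
        ← ENNReal.rpow_add _ _ (w_ne_zero u) (w_ne_top u)]
      congr 1
      rw [hp_def]
      field_simp
      ring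
    have h2 : (w u ^ (-p)) ^ d = ∏ _i : Fin d, w u ^ (-p) := by
      rw [Finset.prod_const, Finset.card_fin]
    rw [h1, h2]
    refine Finset.prod_le_prod' fun i _ => ?_
    refine rpow_neg_le hp0.le ?_
    have habs : |(u i : ℝ)| ≤ znorm u := by
      rw [znorm, ← Real.sqrt_sq_eq_abs]
      exact Real.sqrt_le_sqrt (Finset.single_le_sum (fun j _ => sq_nonneg ((u j : ℝ)))
        (Finset.mem_univ i))
    exact ENNReal.ofReal_le_ofReal (by linarith)
  have hT : ∑' u : V d, w u ^ (-q) * w u ^ (-q) ≤ (∑' k : ℤ, g k) ^ d :=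
    (ENNReal.tsum_le_tsum hpt).trans_eq (tsum_pi_prod g d)
  have hS : ∀ x : V d, ∑' y : V d, w y ^ (-q) * w (x - y) ^ (-q) ≤
      2 * (∑' k : ℤ, g k) ^ d := by
    intro x
    have hpt2 : ∀ y : V d, w y ^ (-q) * w (x - y) ^ (-q) ≤
        w y ^ (-q) * w y ^ (-q) + w (x - y) ^ (-q) * w (x - y) ^ (-q) := by
      intro y
      rcases le_total (w y ^ (-q)) (w (x - y) ^ (-q)) with h | h
      · exact (mul_le_mul_left h _).trans le_add_self
      · exact (mul_le_mul_right h _).trans le_self_add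
    calc ∑' y : V d, w y ^ (-q) * w (x - y) ^ (-q)
        ≤ ∑' y : V d, (w y ^ (-q) * w y ^ (-q) + w (x - y) ^ (-q) * w (x - y) ^ (-q)) :=
          ENNReal.tsum_le_tsum hpt2
      _ = (∑' y : V d, w y ^ (-q) * w y ^ (-q)) +
          ∑' y : V d, w (x - y) ^ (-q) * w (x - y) ^ (-q) := ENNReal.tsum_add
      _ = (∑' y : V d, w y ^ (-q) * w y ^ (-q)) +
          ∑' y : V d, w y ^ (-q) * w y ^ (-q) := by
            rw [tsum_sub_left x (fun v : V d => w v ^ (-q) * w v ^ (-q))]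
      _ ≤ 2 * (∑' k : ℤ, g k) ^ d := by
            rw [two_mul]
            exact add_le_add hT hT
  have hfin : 2 * (∑' k : ℤ, g k) ^ d ≠ ⊤ :=
    ENNReal.mul_ne_top ENNReal.ofNat_ne_top (ENNReal.pow_ne_top hgs)
  exact ne_top_of_le_ne_top hfin (iSup_le hS)

end Stmt9Aux

open Stmt9Aux in
theorem stmt9 (d : ℕ) (hd : 1 ≤ d) (q : ℝ) (hq : (d : ℝ) / 2 < q) :
    Sbar d q ≠ ⊤ ∧
    ∃ C : ℝ, 0 < C ∧ ∀ x y : V d,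
      (∑' u : V d, w u ^ (-(2 * q)) * w (x - u) ^ (-q) * w (y - u) ^ (-q)) ≤
        ENNReal.ofReal C * Sbar d q * (w x ^ (-q) * w y ^ (-q)) := by
  have hd0 : (0 : ℝ) < d := by exact_mod_cast Nat.lt_of_lt_of_le Nat.zero_lt_one hd
  have hq0 : 0 < q := by linarith
  refine ⟨Sbar_ne_top hd hq, 4 * (2 : ℝ) ^ q * 2 ^ q, by positivity, fun x y => ?_⟩
  have hC : ENNReal.ofReal (4 * (2 : ℝ) ^ q * 2 ^ q) =
      4 * (2 : ℝ≥0∞) ^ q * 2 ^ q := by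
    rw [ENNReal.ofReal_mul (by positivity), ENNReal.ofReal_mul (by norm_num),
      ← ENNReal.ofReal_rpow_of_pos two_pos]
    simp [ENNReal.ofReal_ofNat]
  have step1 : ∀ u : V d, w u ^ (-(2 * q)) * w (x - u) ^ (-q) * w (y - u) ^ (-q) =
      (w u ^ (-q) * w (x - u) ^ (-q)) * (w u ^ (-q) * w (y - u) ^ (-q)) := by
    intro u
    have h : w u ^ (-(2 * q)) = w u ^ (-q) * w u ^ (-q) := by
      rw [← ENNReal.rpow_add _ _ (w_ne_zero u) (w_ne_top u)]
      ring_nf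
    rw [h]
    ring
  have step2 : ∀ u : V d,
      (w u ^ (-q) * w (x - u) ^ (-q)) * (w u ^ (-q) * w (y - u) ^ (-q)) ≤
      (2 ^ q * 2 ^ q * (w x ^ (-q) * w y ^ (-q))) *
        ((w u ^ (-q) + w (x - u) ^ (-q)) * (w u ^ (-q) + w (y - u) ^ (-q))) := by
    intro u
    have h := mul_le_mul' (key hq0.le x u) (key hq0.le y u)
    calc (w u ^ (-q) * w (x - u) ^ (-q)) * (w u ^ (-q) * w (y - u) ^ (-q))
        ≤ (2 ^ q * w x ^ (-q) * (w u ^ (-q) + w (x - u) ^ (-q))) *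
          (2 ^ q * w y ^ (-q) * (w u ^ (-q) + w (y - u) ^ (-q))) := h
      _ = (2 ^ q * 2 ^ q * (w x ^ (-q) * w y ^ (-q))) *
          ((w u ^ (-q) + w (x - u) ^ (-q)) * (w u ^ (-q) + w (y - u) ^ (-q))) := by ring
  have hP : ∑' u : V d,
      (w u ^ (-q) + w (x - u) ^ (-q)) * (w u ^ (-q) + w (y - u) ^ (-q)) ≤
      4 * Sbar d q := by
    have hexp : ∀ u : V d,
        (w u ^ (-q) + w (x - u) ^ (-q)) * (w u ^ (-q) + w (y - u) ^ (-q)) =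
        w u ^ (-q) * w u ^ (-q) + w u ^ (-q) * w (y - u) ^ (-q) +
          (w u ^ (-q) * w (x - u) ^ (-q) + w (x - u) ^ (-q) * w (y - u) ^ (-q)) := by
      intro u
      ring
    calc ∑' u : V d,
        (w u ^ (-q) + w (x - u) ^ (-q)) * (w u ^ (-q) + w (y - u) ^ (-q))
        = ∑' u : V d, (w u ^ (-q) * w u ^ (-q) + w u ^ (-q) * w (y - u) ^ (-q) +
            (w u ^ (-q) * w (x - u) ^ (-q) + w (x - u) ^ (-q) * w (y - u) ^ (-q))) :=
          tsum_congr hexp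
      _ = ((∑' u : V d, w u ^ (-q) * w u ^ (-q)) +
            ∑' u : V d, w u ^ (-q) * w (y - u) ^ (-q)) +
          ((∑' u : V d, w u ^ (-q) * w (x - u) ^ (-q)) +
            ∑' u : V d, w (x - u) ^ (-q) * w (y - u) ^ (-q)) := by
          rw [ENNReal.tsum_add, ENNReal.tsum_add, ENNReal.tsum_add]
      _ ≤ (Sbar d q + Sbar d q) + (Sbar d q + Sbar d q) :=
          add_le_add (add_le_add (sum_le_Sbar_0 q) (sum_le_Sbar_1 q y))
            (add_le_add (sum_le_Sbar_1 q x) (sum_le_Sbar_2 q x y))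
      _ = 4 * Sbar d q := by ring
  calc ∑' u : V d, w u ^ (-(2 * q)) * w (x - u) ^ (-q) * w (y - u) ^ (-q)
      ≤ ∑' u : V d, (2 ^ q * 2 ^ q * (w x ^ (-q) * w y ^ (-q))) *
          ((w u ^ (-q) + w (x - u) ^ (-q)) * (w u ^ (-q) + w (y - u) ^ (-q))) :=
        ENNReal.tsum_le_tsum fun u => le_of_le_of_eq (le_of_eq (step1 u)) rfl |>.trans (step2 u)
    _ = (2 ^ q * 2 ^ q * (w x ^ (-q) * w y ^ (-q))) *
        ∑' u : V d, ((w u ^ (-q) + w (x - u) ^ (-q)) * (w u ^ (-q) + w (y - u) ^ (-q))) :=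
        ENNReal.tsum_mul_left
    _ ≤ (2 ^ q * 2 ^ q * (w x ^ (-q) * w y ^ (-q))) * (4 * Sbar d q) :=
        mul_le_mul_right hP _
    _ = ENNReal.ofReal (4 * (2 : ℝ) ^ q * 2 ^ q) * Sbar d q * (w x ^ (-q) * w y ^ (-q)) := by
        rw [hC]
        ring
end

section
/- Let d ≥ 1, let q > d/2, and define S̄ := sup_{x∈ℤ^d} ∑_{y∈ℤ^d} (|y|+1)^{−q}(|x−y|+1)^{−q}, which is finite. Let β > 0 and let f, g : ℤ^d → [0,∞) satisfy f(x) ≤ β(|x|+1)^{−q} and g(x) ≤ (|x|+1)^{−q} for all x. Define M⁽²⁾(x,y) := f(x)² g(y), and recursively M⁽ⁿ⁾(x,y) := ∑_{u∈ℤ^d} M⁽ⁿ⁻¹⁾(u,x) f(x−u) g(y−u) for n ≥ 3. Then there is a constant C depending only on d and q such that for all n ≥ 2 and all x, y ∈ ℤ^d, M⁽ⁿ⁾(x,y) ≤ βⁿ (C S̄)^{n−2} (|x|+1)^{−2q}(|y|+1)^{−q}. -/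
open scoped BigOperators ENNReal

/-- The self-avoiding walk diagrams: `M⁽²⁾(x,y) = f(x)² g(y)` and, recursively for `n ≥ 3`,
`M⁽ⁿ⁾(x,y) = ∑_u M⁽ⁿ⁻¹⁾(u,x) f(x−u) g(y−u)`. -/
noncomputable def Msaw {d : ℕ} (f g : V d → ℝ) : ℕ → V d → V d → ℝ≥0∞
  | 0, _, _ => 0
  | 1, _, _ => 0
  | 2, x, y => ENNReal.ofReal (f x) ^ 2 * ENNReal.ofReal (g y)
  | n + 3, x, y => ∑' u : V d,
      Msaw f g (n + 2) u x * ENNReal.ofReal (f (x - u)) * ENNReal.ofReal (g (y - u))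

/-! ### Auxiliary lemmas -/

noncomputable def emb {d : ℕ} (x : V d) : EuclideanSpace ℝ (Fin d) := WithLp.toLp 2 (fun i => (x i : ℝ))

lemma znorm_eq {d : ℕ} (x : V d) : znorm x = ‖emb x‖ := by
  rw [EuclideanSpace.norm_eq]
  simp [znorm, emb, sq_abs]

lemma znorm_nonneg {d : ℕ} (x : V d) : 0 ≤ znorm x := Real.sqrt_nonneg _

lemma znorm_neg {d : ℕ} (x : V d) : znorm (-x) = znorm x := by
  simp [znorm]

lemma emb_sub {d : ℕ} (x y : V d) : emb (x - y) = emb x - emb y := by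
  ext i
  simp [emb]

lemma znorm_triangle {d : ℕ} (x u : V d) : znorm x ≤ znorm u + znorm (x - u) := by
  rw [znorm_eq, znorm_eq, znorm_eq, emb_sub]
  simpa using norm_add_le (emb u) (emb x - emb u)

lemma abs_le_znorm {d : ℕ} (x : V d) (i : Fin d) : |(x i : ℝ)| ≤ znorm x := by
  rw [← Real.sqrt_sq_eq_abs, znorm]
  exact Real.sqrt_le_sqrt (Finset.single_le_sum (f := fun j => ((x j : ℝ))^2)
    (fun j _ => sq_nonneg _) (Finset.mem_univ i))

lemma wbase_pos {d : ℕ} (x : V d) : 0 < znorm x + 1 := by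
  have := znorm_nonneg x; linarith

lemma w_ne_zero {d : ℕ} (x : V d) : w x ≠ 0 := by
  simp [w, ENNReal.ofReal_pos.2 (wbase_pos x), ne_of_gt]

lemma w_ne_top {d : ℕ} (x : V d) : w x ≠ ⊤ := ENNReal.ofReal_ne_top

lemma w_rpow {d : ℕ} (x : V d) (p : ℝ) :
    w x ^ p = ENNReal.ofReal ((znorm x + 1) ^ p) :=
  ENNReal.ofReal_rpow_of_pos (wbase_pos x)

lemma w_neg {d : ℕ} (x : V d) : w (-x) = w x := by
  simp [w, znorm_neg]

lemma w_zero_sub {d : ℕ} (x : V d) : w (0 - x) = w x := by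
  rw [zero_sub, w_neg]

lemma real_key {q : ℝ} (hq : 0 < q) {a c m : ℝ} (ha : 1 ≤ a) (hc : 1 ≤ c) (hm : 0 < m)
    (hmac : m ≤ a + c) :
    a ^ (-q) * c ^ (-q) ≤ (2:ℝ) ^ q * m ^ (-q) * (a ^ (-q) + c ^ (-q)) := by
  wlog hac : a ≤ c generalizing a c
  · rw [mul_comm, add_comm (a ^ (-q))]
    exact this hc ha (by linarith) (le_of_not_ge hac)
  have hc2 : m / 2 ≤ c := by linarith
  have h1 : c ^ (-q) ≤ (m / 2) ^ (-q) :=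
    Real.rpow_le_rpow_of_nonpos (by linarith) hc2 (by linarith)
  have h2 : (m / 2) ^ (-q) = 2 ^ q * m ^ (-q) := by
    rw [Real.div_rpow hm.le (by norm_num), Real.rpow_neg (by norm_num : (0:ℝ) ≤ 2)]
    field_simp
  rw [h2] at h1
  have hA : 0 ≤ a ^ (-q) := Real.rpow_nonneg (by linarith) _
  have hC : 0 ≤ c ^ (-q) := Real.rpow_nonneg (by linarith) _
  have hM : 0 ≤ 2 ^ q * m ^ (-q) := by positivity
  have haq : a ^ (-q) ≤ 1 := by
    calc a ^ (-q) ≤ 1 ^ (-q) := Real.rpow_le_rpow_of_nonpos one_pos ha (by linarith)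
    _ = 1 := Real.one_rpow _
  nlinarith

/-- The key pointwise inequality in `ℝ≥0∞`. -/
lemma keyA {d : ℕ} {q : ℝ} (hq : 0 < q) (x u : V d) :
    w u ^ (-q) * w (x - u) ^ (-q) ≤
      ENNReal.ofReal ((2:ℝ) ^ q) * w x ^ (-q) * (w u ^ (-q) + w (x - u) ^ (-q)) := by
  rw [w_rpow, w_rpow, w_rpow,
    ← ENNReal.ofReal_mul (Real.rpow_nonneg (wbase_pos u).le _),
    ← ENNReal.ofReal_add (Real.rpow_nonneg (wbase_pos u).le _)
      (Real.rpow_nonneg (wbase_pos (x - u)).le _),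
    ← ENNReal.ofReal_mul (by positivity : (0:ℝ) ≤ (2:ℝ) ^ q),
    ← ENNReal.ofReal_mul (mul_nonneg (by positivity) (Real.rpow_nonneg (wbase_pos x).le _))]
  exact ENNReal.ofReal_le_ofReal <| real_key hq
    (by have := znorm_nonneg u; linarith) (by have := znorm_nonneg (x - u); linarith)
    (wbase_pos x) (by have := znorm_triangle x u; linarith)

lemma sum_le_Sbar {d : ℕ} (q : ℝ) (a b : V d) :
    ∑' u : V d, w (a - u) ^ (-q) * w (b - u) ^ (-q) ≤ Sbar d q := by
  have key : ∑' u : V d, w (a - u) ^ (-q) * w (b - u) ^ (-q)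
      = ∑' v : V d, w v ^ (-q) * w ((a - b) - v) ^ (-q) := by
    rw [← (Equiv.subLeft a).tsum_eq (fun u => w (a - u) ^ (-q) * w (b - u) ^ (-q))]
    congr 1
    funext v
    have h1 : a - (Equiv.subLeft a v) = v := by simp [Equiv.subLeft]
    have h2 : w (b - (Equiv.subLeft a v)) = w ((a - b) - v) := by
      have : b - (Equiv.subLeft a v) = -((a - b) - v) := by simp [Equiv.subLeft]; abel
      rw [this, w_neg]
    simp only [h1, h2]
  rw [key]
  exact le_iSup (fun x => ∑' y : V d, w y ^ (-q) * w (x - y) ^ (-q)) (a - b)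

/-- The master convolution bound. -/
lemma conv_bound {d : ℕ} {q : ℝ} (hq : 0 < q) (x y : V d) :
    ∑' u : V d, w u ^ (-(2*q)) * w (x - u) ^ (-q) * w (y - u) ^ (-q) ≤
      ENNReal.ofReal (4 * (2:ℝ) ^ q * 2 ^ q) * Sbar d q * (w x ^ (-q) * w y ^ (-q)) := by
  set E := ENNReal.ofReal ((2:ℝ) ^ q) with hE
  have pointwise : ∀ u : V d, w u ^ (-(2*q)) * w (x - u) ^ (-q) * w (y - u) ^ (-q) ≤
      E * E * (w x ^ (-q) * w y ^ (-q)) *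
        ((w u ^ (-q) + w (x - u) ^ (-q)) * (w u ^ (-q) + w (y - u) ^ (-q))) := by
    intro u
    have hsplit : w u ^ (-(2*q)) = w u ^ (-q) * w u ^ (-q) := by
      rw [← ENNReal.rpow_add _ _ (w_ne_zero u) (w_ne_top u)]
      ring_nf
    calc w u ^ (-(2*q)) * w (x - u) ^ (-q) * w (y - u) ^ (-q)
        = (w u ^ (-q) * w (x - u) ^ (-q)) * (w u ^ (-q) * w (y - u) ^ (-q)) := by
          rw [hsplit]; ring
      _ ≤ (E * w x ^ (-q) * (w u ^ (-q) + w (x - u) ^ (-q))) *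
            (E * w y ^ (-q) * (w u ^ (-q) + w (y - u) ^ (-q))) :=
          mul_le_mul' (keyA hq x u) (keyA hq y u)
      _ = E * E * (w x ^ (-q) * w y ^ (-q)) *
            ((w u ^ (-q) + w (x - u) ^ (-q)) * (w u ^ (-q) + w (y - u) ^ (-q))) := by ring
  have sum4 : ∑' u : V d,
      (w u ^ (-q) + w (x - u) ^ (-q)) * (w u ^ (-q) + w (y - u) ^ (-q)) ≤ 4 * Sbar d q := by
    have expand : ∀ u : V d,
        (w u ^ (-q) + w (x - u) ^ (-q)) * (w u ^ (-q) + w (y - u) ^ (-q))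
        = w (0 - u) ^ (-q) * w (0 - u) ^ (-q) + w (0 - u) ^ (-q) * w (y - u) ^ (-q)
          + w (x - u) ^ (-q) * w (0 - u) ^ (-q) + w (x - u) ^ (-q) * w (y - u) ^ (-q) := by
      intro u; rw [w_zero_sub]; ring
    calc ∑' u : V d, (w u ^ (-q) + w (x - u) ^ (-q)) * (w u ^ (-q) + w (y - u) ^ (-q))
        = (∑' u : V d, w (0 - u) ^ (-q) * w (0 - u) ^ (-q))
          + (∑' u : V d, w (0 - u) ^ (-q) * w (y - u) ^ (-q))
          + (∑' u : V d, w (x - u) ^ (-q) * w (0 - u) ^ (-q))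
          + (∑' u : V d, w (x - u) ^ (-q) * w (y - u) ^ (-q)) := by
          simp only [expand]
          rw [ENNReal.tsum_add, ENNReal.tsum_add, ENNReal.tsum_add]
      _ ≤ Sbar d q + Sbar d q + Sbar d q + Sbar d q :=
          add_le_add (add_le_add (add_le_add (sum_le_Sbar q 0 0) (sum_le_Sbar q 0 y))
            (sum_le_Sbar q x 0)) (sum_le_Sbar q x y)
      _ = 4 * Sbar d q := by ring
  calc ∑' u : V d, w u ^ (-(2*q)) * w (x - u) ^ (-q) * w (y - u) ^ (-q)
      ≤ ∑' u : V d, E * E * (w x ^ (-q) * w y ^ (-q)) *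
          ((w u ^ (-q) + w (x - u) ^ (-q)) * (w u ^ (-q) + w (y - u) ^ (-q))) :=
        ENNReal.tsum_le_tsum pointwise
    _ = E * E * (w x ^ (-q) * w y ^ (-q)) * ∑' u : V d,
          (w u ^ (-q) + w (x - u) ^ (-q)) * (w u ^ (-q) + w (y - u) ^ (-q)) :=
        ENNReal.tsum_mul_left
    _ ≤ E * E * (w x ^ (-q) * w y ^ (-q)) * (4 * Sbar d q) :=
        mul_le_mul_right sum4 _
    _ = (4 * (E * E)) * Sbar d q * (w x ^ (-q) * w y ^ (-q)) := by ring
    _ = ENNReal.ofReal (4 * (2:ℝ) ^ q * 2 ^ q) * Sbar d q * (w x ^ (-q) * w y ^ (-q)) := by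
        have h4 : ENNReal.ofReal (4 * (2:ℝ) ^ q * 2 ^ q) = 4 * (E * E) := by
          rw [ENNReal.ofReal_mul (by positivity), ENNReal.ofReal_mul (by norm_num),
            ENNReal.ofReal_ofNat, hE]
          ring
        rw [h4]

lemma tsum_pi_prod (g : ℤ → ℝ≥0∞) :
    ∀ m : ℕ, ∑' y : Fin m → ℤ, ∏ i, g (y i) = (∑' k : ℤ, g k) ^ m := by
  intro m
  induction m with
  | zero =>
      have h1 : ∀ y : Fin 0 → ℤ, (∏ i, g (y i)) = 1 := fun y => by simp
      simp only [h1, pow_zero]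
      exact tsum_eq_single (fun i => i.elim0) (fun b hb => absurd (Subsingleton.elim b _) hb)
  | succ m ih =>
      rw [← (Fin.consEquiv (fun _ : Fin (m+1) => ℤ)).tsum_eq
        (fun y : Fin (m+1) → ℤ => ∏ i, g (y i)), ENNReal.tsum_prod']
      calc ∑' (k : ℤ) (z : Fin m → ℤ), ∏ i, g ((Fin.consEquiv (fun _ : Fin (m+1) => ℤ)) (k, z) i)
          = ∑' (k : ℤ) (z : Fin m → ℤ), g k * ∏ i, g (z i) := by
            congr 1; funext k; congr 1; funext z
            rw [show ((Fin.consEquiv (fun _ : Fin (m+1) => ℤ)) (k, z) : Fin (m+1) → ℤ)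
              = Fin.cons k z from rfl, Fin.prod_univ_succ]
            simp
        _ = ∑' (k : ℤ), g k * ∑' z : Fin m → ℤ, ∏ i, g (z i) := by
            congr 1; funext k
            exact ENNReal.tsum_mul_left
        _ = (∑' k : ℤ, g k) * ∑' z : Fin m → ℤ, ∏ i, g (z i) := ENNReal.tsum_mul_right
        _ = (∑' k : ℤ, g k) ^ (m + 1) := by rw [ih]; ring

theorem stmt10 (d : ℕ) (hd : 1 ≤ d) (q : ℝ) (hq : (d : ℝ) / 2 < q) :
    Sbar d q ≠ ⊤ ∧
    ∃ C : ℝ, 0 < C ∧ ∀ β : ℝ, 0 < β → ∀ f g : V d → ℝ,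
      (∀ x, 0 ≤ f x) → (∀ x, 0 ≤ g x) →
      (∀ x, f x ≤ β * (znorm x + 1) ^ (-q)) →
      (∀ x, g x ≤ (znorm x + 1) ^ (-q)) →
      ∀ n : ℕ, 2 ≤ n → ∀ x y : V d,
        Msaw f g n x y ≤ ENNReal.ofReal β ^ n * (ENNReal.ofReal C * Sbar d q) ^ (n - 2) *
          w x ^ (-(2 * q)) * w y ^ (-q) := by
  have hdpos : (0:ℝ) < d := by exact_mod_cast hd
  have hqpos : 0 < q := lt_of_le_of_lt (by positivity) hq
  -- the exponent for the one-dimensional comparison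
  set r : ℝ := 2 * q / d with hr_def
  have hr : 1 < r := by
    rw [hr_def, lt_div_iff₀ hdpos]
    linarith
  set g0 : ℤ → ℝ≥0∞ := fun k => ENNReal.ofReal ((|(k:ℝ)| + 1) ^ (-r)) with hg0
  -- one-dimensional summability
  have hs : Summable (fun k : ℤ => (|(k:ℝ)| + 1) ^ (-r)) := by
    apply Summable.of_nonneg_of_le (fun k => Real.rpow_nonneg (by positivity) _)
      (fun k => ?_) ((Real.summable_one_div_int_add_rpow (1/2) r).2 hr)
    have h0 : (0:ℝ) < |(k:ℝ) + 1/2| := by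
      rw [abs_pos]
      intro h
      have : ((2*k + 1 : ℤ) : ℝ) = 2 * ((k:ℝ) + 1/2) := by push_cast; ring
      rw [h, mul_zero] at this
      have : (2*k + 1 : ℤ) = 0 := by exact_mod_cast this
      omega
    have hle : |(k:ℝ) + 1/2| ≤ |(k:ℝ)| + 1 := by
      have h := abs_add_le (k:ℝ) (1/2)
      rw [show |(1/2:ℝ)| = 1/2 by norm_num] at h
      linarith
    rw [Real.rpow_neg (by positivity), ← one_div]
    apply one_div_le_one_div_of_le (Real.rpow_pos_of_pos h0 r)
    exact Real.rpow_le_rpow h0.le hle (by linarith)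
  have hg0top : ∑' k : ℤ, g0 k ≠ ⊤ := by
    rw [hg0, ← ENNReal.ofReal_tsum_of_nonneg (fun k => Real.rpow_nonneg (by positivity) _) hs]
    exact ENNReal.ofReal_ne_top
  -- finiteness of the 2q-sum over ℤ^d
  have hZle : ∑' y : V d, w y ^ (-(2*q)) ≤ (∑' k : ℤ, g0 k) ^ d := by
    rw [← tsum_pi_prod g0 d]
    apply ENNReal.tsum_le_tsum
    intro y
    rw [w_rpow]
    have hprod : ∀ i : Fin d, (0:ℝ) < |(y i : ℝ)| + 1 := fun i => by positivity
    have key : (znorm y + 1) ^ (-(2*q)) ≤ ∏ i, (|(y i : ℝ)| + 1) ^ (-r) := by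
      have hP : ∏ i, (|(y i : ℝ)| + 1) ≤ (znorm y + 1) ^ (d:ℕ) := by
        calc ∏ i, (|(y i : ℝ)| + 1) ≤ ∏ _i : Fin d, (znorm y + 1) :=
              Finset.prod_le_prod (fun i _ => (hprod i).le)
                (fun i _ => by have := abs_le_znorm y i; linarith)
          _ = (znorm y + 1) ^ (d:ℕ) := by
              rw [Finset.prod_const, Finset.card_univ, Fintype.card_fin]
      have hPpos : 0 < ∏ i, (|(y i : ℝ)| + 1) :=
        Finset.prod_pos (fun i _ => hprod i)
      have hexp : (znorm y + 1) ^ (-(2*q)) = ((znorm y + 1) ^ (d:ℕ)) ^ (-r) := by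
        rw [← Real.rpow_natCast (znorm y + 1) d, ← Real.rpow_mul (wbase_pos y).le]
        congr 1
        rw [hr_def]
        field_simp
      rw [hexp]
      calc ((znorm y + 1) ^ (d:ℕ)) ^ (-r) ≤ (∏ i, (|(y i : ℝ)| + 1)) ^ (-r) :=
            Real.rpow_le_rpow_of_nonpos hPpos hP (by linarith)
        _ = ∏ i, (|(y i : ℝ)| + 1) ^ (-r) :=
            (Real.finset_prod_rpow Finset.univ _ (fun i _ => (hprod i).le) _).symm
    calc ENNReal.ofReal ((znorm y + 1) ^ (-(2*q)))
        ≤ ENNReal.ofReal (∏ i, (|(y i : ℝ)| + 1) ^ (-r)) := ENNReal.ofReal_le_ofReal key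
      _ = ∏ i, g0 (y i) := by
          rw [ENNReal.ofReal_prod_of_nonneg
            (fun i _ => Real.rpow_nonneg (hprod i).le _)]
  have hZtop : ∑' y : V d, w y ^ (-(2*q)) ≠ ⊤ :=
    ne_top_of_le_ne_top (ENNReal.pow_ne_top hg0top) hZle
  -- Sbar ≤ 2 Z
  have hSbar2 : Sbar d q ≤ 2 * ∑' y : V d, w y ^ (-(2*q)) := by
    apply iSup_le
    intro x
    have pointwise : ∀ y : V d, w y ^ (-q) * w (x - y) ^ (-q) ≤
        w y ^ (-(2*q)) + w (x - y) ^ (-(2*q)) := by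
      intro y
      have h1 : w y ^ (-(2*q)) = w y ^ (-q) * w y ^ (-q) := by
        rw [← ENNReal.rpow_add _ _ (w_ne_zero y) (w_ne_top y)]; ring_nf
      have h2 : w (x - y) ^ (-(2*q)) = w (x - y) ^ (-q) * w (x - y) ^ (-q) := by
        rw [← ENNReal.rpow_add _ _ (w_ne_zero (x - y)) (w_ne_top (x - y))]; ring_nf
      rw [h1, h2]
      rcases le_total (w y ^ (-q)) (w (x - y) ^ (-q)) with h | h
      · calc w y ^ (-q) * w (x - y) ^ (-q) ≤ w (x - y) ^ (-q) * w (x - y) ^ (-q) :=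
              mul_le_mul_left h _
          _ ≤ _ := le_add_self
      · calc w y ^ (-q) * w (x - y) ^ (-q) ≤ w y ^ (-q) * w y ^ (-q) :=
              mul_le_mul_right h _
          _ ≤ _ := le_self_add
    calc ∑' y : V d, w y ^ (-q) * w (x - y) ^ (-q)
        ≤ ∑' y : V d, (w y ^ (-(2*q)) + w (x - y) ^ (-(2*q))) :=
          ENNReal.tsum_le_tsum pointwise
      _ = (∑' y : V d, w y ^ (-(2*q))) + ∑' y : V d, w (x - y) ^ (-(2*q)) :=
          ENNReal.tsum_add
      _ = (∑' y : V d, w y ^ (-(2*q))) + ∑' y : V d, w y ^ (-(2*q)) := by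
          congr 1
          exact (Equiv.subLeft x).tsum_eq (fun y => w y ^ (-(2*q)))
      _ = 2 * ∑' y : V d, w y ^ (-(2*q)) := by ring
  have hSbarTop : Sbar d q ≠ ⊤ :=
    ne_top_of_le_ne_top (ENNReal.mul_ne_top (by norm_num) hZtop) hSbar2
  refine ⟨hSbarTop, 4 * (2:ℝ) ^ q * 2 ^ q, by positivity, ?_⟩
  intro β hβ f g hf0 hg0' hfb hgb n hn x y
  set K : ℝ≥0∞ := ENNReal.ofReal (4 * (2:ℝ) ^ q * 2 ^ q) * Sbar d q with hK
  -- pointwise bounds on f and g in ℝ≥0∞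
  have hfE : ∀ z : V d, ENNReal.ofReal (f z) ≤ ENNReal.ofReal β * w z ^ (-q) := by
    intro z
    calc ENNReal.ofReal (f z) ≤ ENNReal.ofReal (β * (znorm z + 1) ^ (-q)) :=
          ENNReal.ofReal_le_ofReal (hfb z)
      _ = ENNReal.ofReal β * w z ^ (-q) := by
          rw [ENNReal.ofReal_mul hβ.le, w_rpow]
  have hgE : ∀ z : V d, ENNReal.ofReal (g z) ≤ w z ^ (-q) := by
    intro z
    rw [w_rpow]
    exact ENNReal.ofReal_le_ofReal (hgb z)
  have hwsq : ∀ z : V d, w z ^ (-q) * w z ^ (-q) = w z ^ (-(2*q)) := by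
    intro z
    rw [← ENNReal.rpow_add _ _ (w_ne_zero z) (w_ne_top z)]; ring_nf
  -- main induction
  have claim : ∀ m : ℕ, ∀ x y : V d, Msaw f g (m + 2) x y ≤
      ENNReal.ofReal β ^ (m + 2) * K ^ m * w x ^ (-(2*q)) * w y ^ (-q) := by
    intro m
    induction m with
    | zero =>
        intro x y
        show ENNReal.ofReal (f x) ^ 2 * ENNReal.ofReal (g y) ≤ _
        calc ENNReal.ofReal (f x) ^ 2 * ENNReal.ofReal (g y)
            ≤ (ENNReal.ofReal β * w x ^ (-q)) ^ 2 * w y ^ (-q) :=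
              mul_le_mul' (pow_le_pow_left' (hfE x) 2) (hgE y)
          _ = ENNReal.ofReal β ^ 2 * (w x ^ (-q) * w x ^ (-q)) * w y ^ (-q) := by ring
          _ = ENNReal.ofReal β ^ (0 + 2) * K ^ 0 * w x ^ (-(2*q)) * w y ^ (-q) := by
              rw [hwsq]; ring
    | succ m ih =>
        intro x y
        show (∑' u : V d, Msaw f g (m + 2) u x * ENNReal.ofReal (f (x - u)) *
            ENNReal.ofReal (g (y - u))) ≤ _
        have pointwise : ∀ u : V d,
            Msaw f g (m + 2) u x * ENNReal.ofReal (f (x - u)) * ENNReal.ofReal (g (y - u)) ≤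
            ENNReal.ofReal β ^ (m + 3) * K ^ m * w x ^ (-q) *
              (w u ^ (-(2*q)) * w (x - u) ^ (-q) * w (y - u) ^ (-q)) := by
          intro u
          calc Msaw f g (m + 2) u x * ENNReal.ofReal (f (x - u)) * ENNReal.ofReal (g (y - u))
              ≤ (ENNReal.ofReal β ^ (m + 2) * K ^ m * w u ^ (-(2*q)) * w x ^ (-q)) *
                  (ENNReal.ofReal β * w (x - u) ^ (-q)) * w (y - u) ^ (-q) :=
                mul_le_mul' (mul_le_mul' (ih u x) (hfE (x - u))) (hgE (y - u))
            _ = ENNReal.ofReal β ^ (m + 3) * K ^ m * w x ^ (-q) *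
                  (w u ^ (-(2*q)) * w (x - u) ^ (-q) * w (y - u) ^ (-q)) := by ring
        calc (∑' u : V d, Msaw f g (m + 2) u x * ENNReal.ofReal (f (x - u)) *
              ENNReal.ofReal (g (y - u)))
            ≤ ∑' u : V d, ENNReal.ofReal β ^ (m + 3) * K ^ m * w x ^ (-q) *
                (w u ^ (-(2*q)) * w (x - u) ^ (-q) * w (y - u) ^ (-q)) :=
              ENNReal.tsum_le_tsum pointwise
          _ = ENNReal.ofReal β ^ (m + 3) * K ^ m * w x ^ (-q) *
                ∑' u : V d, w u ^ (-(2*q)) * w (x - u) ^ (-q) * w (y - u) ^ (-q) :=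
              ENNReal.tsum_mul_left
          _ ≤ ENNReal.ofReal β ^ (m + 3) * K ^ m * w x ^ (-q) *
                (K * (w x ^ (-q) * w y ^ (-q))) := by
              apply mul_le_mul_right
              rw [hK, mul_assoc]
              exact le_trans (conv_bound hqpos x y) (by rw [mul_assoc])
          _ = ENNReal.ofReal β ^ (m + 3) * K ^ (m + 1) *
                (w x ^ (-q) * w x ^ (-q)) * w y ^ (-q) := by ring
          _ = ENNReal.ofReal β ^ (m + 1 + 2) * K ^ (m + 1) * w x ^ (-(2*q)) * w y ^ (-q) := by
              rw [hwsq]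
  obtain ⟨m, rfl⟩ : ∃ m, n = m + 2 := ⟨n - 2, by omega⟩
  simpa using claim m x y
end
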